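/- Delayed double-sum bound for exponentially weighted averages. Let β₁ ∈ [0,1), let a_1, a_2, … be nonnegative real numbers, let τ_max ≥ 0 be an integer, and for each t ∈ {1,…,T} let τ_t be an integer with 0 ≤ τ_t ≤ τ_max. Then Σ_{t=1}^T Σ_{s=max(t−τ_t,1)}^{t−1} (1−β₁)·Σ_{u=1}^s β₁^{s−u}·a_u ≤ τ_max·Σ_{t=1}^T a_t. -/

import Mathlib

/-- **Delayed double-sum bound for exponentially weighted averages.**
For `β₁ ∈ [0,1)`, nonnegative `a_u`, and integer delays `0 ≤ τ_t ≤ τ_max`,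
`∑_{t=1}^T ∑_{s=max(t−τ_t,1)}^{t−1} (1−β₁) ∑_{u=1}^s β₁^{s−u} a_u ≤ τ_max ∑_{t=1}^T a_t`. -/
theorem delayed_double_sum_bound (β₁ : ℝ) (hβ₁ : β₁ ∈ Set.Ico (0 : ℝ) 1)
    (a : ℕ → ℝ) (ha : ∀ u, 0 ≤ a u)
    (T τmax : ℕ) (τ : ℕ → ℕ) (hτ : ∀ t ∈ Finset.Icc 1 T, τ t ≤ τmax) :
    ∑ t ∈ Finset.Icc 1 T, ∑ s ∈ Finset.Icc (max (t - τ t) 1) (t - 1),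
        (1 - β₁) * ∑ u ∈ Finset.Icc 1 s, β₁ ^ (s - u) * a u
      ≤ (τmax : ℝ) * ∑ t ∈ Finset.Icc 1 T, a t := by
  obtain ⟨hβ0, hβ1⟩ := hβ₁
  set f : ℕ → ℝ := fun s => (1 - β₁) * ∑ u ∈ Finset.Icc 1 s, β₁ ^ (s - u) * a u with hf
  have hf0 : ∀ s, 0 ≤ f s := fun s =>
    mul_nonneg (by linarith) (Finset.sum_nonneg fun u _ => mul_nonneg (pow_nonneg hβ0 _) (ha u))
  -- key recursion lemma
  have key : ∀ N : ℕ, ∑ s ∈ Finset.Icc 1 N, f s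
      = ∑ u ∈ Finset.Icc 1 N, a u - β₁ * ∑ u ∈ Finset.Icc 1 N, β₁ ^ (N - u) * a u := by
    intro N
    induction N with
    | zero => simp
    | succ N ih =>
      rw [Finset.sum_Icc_succ_top (by omega : 1 ≤ N + 1),
          Finset.sum_Icc_succ_top (by omega : 1 ≤ N + 1),
          Finset.sum_Icc_succ_top (by omega : 1 ≤ N + 1), ih]
      have hE : ∑ u ∈ Finset.Icc 1 N, β₁ ^ (N + 1 - u) * a u
          = β₁ * ∑ u ∈ Finset.Icc 1 N, β₁ ^ (N - u) * a u := by
        rw [Finset.mul_sum]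
        apply Finset.sum_congr rfl
        intro u hu
        simp only [Finset.mem_Icc] at hu
        have : N + 1 - u = (N - u) + 1 := by omega
        rw [this, pow_succ]
        ring
      have hF : f (N + 1) = (1 - β₁) * (∑ u ∈ Finset.Icc 1 N, β₁ ^ (N + 1 - u) * a u
          + β₁ ^ (N + 1 - (N + 1)) * a (N + 1)) := by
        rw [hf]
        simp only
        rw [Finset.sum_Icc_succ_top (by omega : 1 ≤ N + 1)]
      rw [hF, hE]
      simp only [Nat.sub_self, pow_zero]
      ring
  have hkey : ∀ N : ℕ, ∑ s ∈ Finset.Icc 1 N, f s ≤ ∑ u ∈ Finset.Icc 1 N, a u := by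
    intro N
    rw [key N]
    have : 0 ≤ β₁ * ∑ u ∈ Finset.Icc 1 N, β₁ ^ (N - u) * a u :=
      mul_nonneg hβ0 (Finset.sum_nonneg fun u _ => mul_nonneg (pow_nonneg hβ0 _) (ha u))
    linarith
  -- step 1: enlarge inner sum to ite form
  have h1 : ∀ t ∈ Finset.Icc 1 T,
      ∑ s ∈ Finset.Icc (max (t - τ t) 1) (t - 1), f s
      ≤ ∑ s ∈ Finset.Icc 1 T, (if s + 1 ≤ t ∧ t ≤ s + τmax then f s else 0) := by
    intro t ht
    have htm : τ t ≤ τmax := hτ t ht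
    simp only [Finset.mem_Icc] at ht
    have hsub : Finset.Icc (max (t - τ t) 1) (t - 1) ⊆ Finset.Icc 1 T := by
      intro s hs
      simp only [Finset.mem_Icc, max_le_iff] at hs ⊢
      omega
    calc ∑ s ∈ Finset.Icc (max (t - τ t) 1) (t - 1), f s
        = ∑ s ∈ Finset.Icc (max (t - τ t) 1) (t - 1),
            (if s + 1 ≤ t ∧ t ≤ s + τmax then f s else 0) := by
          apply Finset.sum_congr rfl
          intro s hs
          simp only [Finset.mem_Icc, max_le_iff] at hs
          rw [if_pos (by omega)]
      _ ≤ ∑ s ∈ Finset.Icc 1 T, (if s + 1 ≤ t ∧ t ≤ s + τmax then f s else 0) := by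
          apply Finset.sum_le_sum_of_subset_of_nonneg hsub
          intro s _ _
          split
          · exact hf0 s
          · exact le_rfl
  -- step 2: count multiplicities
  have h2 : ∀ s : ℕ,
      ∑ t ∈ Finset.Icc 1 T, (if s + 1 ≤ t ∧ t ≤ s + τmax then f s else 0)
      ≤ (τmax : ℝ) * f s := by
    intro s
    rw [Finset.sum_ite, Finset.sum_const_zero, add_zero, Finset.sum_const, nsmul_eq_mul]
    have hcard : ((Finset.Icc 1 T).filter (fun t => s + 1 ≤ t ∧ t ≤ s + τmax)).card ≤ τmax := by
      have hsub : (Finset.Icc 1 T).filter (fun t => s + 1 ≤ t ∧ t ≤ s + τmax)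
          ⊆ Finset.Icc (s + 1) (s + τmax) := by
        intro t ht
        simp only [Finset.mem_filter, Finset.mem_Icc] at ht ⊢
        omega
      calc _ ≤ (Finset.Icc (s + 1) (s + τmax)).card := Finset.card_le_card hsub
        _ = τmax := by rw [Nat.card_Icc]; omega
    exact mul_le_mul_of_nonneg_right (by exact_mod_cast hcard) (hf0 s)
  calc ∑ t ∈ Finset.Icc 1 T, ∑ s ∈ Finset.Icc (max (t - τ t) 1) (t - 1), f s
      ≤ ∑ t ∈ Finset.Icc 1 T, ∑ s ∈ Finset.Icc 1 T,
          (if s + 1 ≤ t ∧ t ≤ s + τmax then f s else 0) := Finset.sum_le_sum h1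
    _ = ∑ s ∈ Finset.Icc 1 T, ∑ t ∈ Finset.Icc 1 T,
          (if s + 1 ≤ t ∧ t ≤ s + τmax then f s else 0) := Finset.sum_comm
    _ ≤ ∑ s ∈ Finset.Icc 1 T, (τmax : ℝ) * f s := Finset.sum_le_sum fun s _ => h2 s
    _ = (τmax : ℝ) * ∑ s ∈ Finset.Icc 1 T, f s := by rw [Finset.mul_sum]
    _ ≤ (τmax : ℝ) * ∑ t ∈ Finset.Icc 1 T, a t :=
        mul_le_mul_of_nonneg_left (hkey T) (by positivity)
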